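/- arXiv:1302.4783 — 3 statements merged into one kernel-verified Lean document; each statement's English description precedes it below -/
import Mathlib

section
/- In any partial deterministic BBI model (where for all a, b, the composition a ∘ b has at most one element), the formula (F ∗ F) → F with F := ¬(⊤ −∗ ¬⊤*) is valid. -/
/-- A non-deterministic monoid: `op : M → M → Set M` with unit `e`,
satisfying identity, commutativity, and associativity of the set-lifted
composition. -/
structure NDM (M : Type) where
  op : M → M → Set M
  e : M
  identity : ∀ a : M, op e a = {a}
  comm : ∀ a b : M, op a b = op b a
  assoc : ∀ a b c : M, (⋃ k ∈ op b c, op a k) = ⋃ l ∈ op a b, op l c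

/-- BBI formulas. -/
inductive BBIForm where
  | atom : ℕ → BBIForm
  | top : BBIForm
  | bot : BBIForm
  | emp : BBIForm               -- ⊤*
  | neg : BBIForm → BBIForm
  | conj : BBIForm → BBIForm → BBIForm
  | disj : BBIForm → BBIForm → BBIForm
  | imp : BBIForm → BBIForm → BBIForm
  | star : BBIForm → BBIForm → BBIForm
  | wand : BBIForm → BBIForm → BBIForm

/-- The BBI forcing relation over a non-deterministic monoid model. -/
def force {M : Type} (N : NDM M) (v : ℕ → Set M) : M → BBIForm → Prop
  | m, BBIForm.atom p => m ∈ v p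
  | _, BBIForm.top => True
  | _, BBIForm.bot => False
  | m, BBIForm.emp => m = N.e
  | m, BBIForm.neg A => ¬ force N v m A
  | m, BBIForm.conj A B => force N v m A ∧ force N v m B
  | m, BBIForm.disj A B => force N v m A ∨ force N v m B
  | m, BBIForm.imp A B => force N v m A → force N v m B
  | m, BBIForm.star A B => ∃ a b : M, m ∈ N.op a b ∧ force N v a A ∧ force N v b B
  | m, BBIForm.wand A B => ∀ a b : M, b ∈ N.op m a → force N v a A → force N v b B

/-- In any partial deterministic BBI model, (F ∗ F) → F is valid,
where F = ¬(⊤ −∗ ¬⊤*). -/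
theorem bbi_pd_valid {M : Type} (N : NDM M) (v : ℕ → Set M)
    (hPD : ∀ a b c d : M, c ∈ N.op a b → d ∈ N.op a b → c = d)
    (m : M) :
    force N v m
      (BBIForm.imp
        (BBIForm.star (BBIForm.neg (BBIForm.wand BBIForm.top (BBIForm.neg BBIForm.emp)))
                      (BBIForm.neg (BBIForm.wand BBIForm.top (BBIForm.neg BBIForm.emp))))
        (BBIForm.neg (BBIForm.wand BBIForm.top (BBIForm.neg BBIForm.emp)))) := by
  simp only [force, not_forall]
  rintro ⟨a, b, hm, ha, hb⟩
  push_neg at ha hb ⊢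
  obtain ⟨a', ea, hea, -, hea'⟩ := ha
  obtain ⟨b', eb, heb, -, heb'⟩ := hb
  subst hea'; subst heb'
  -- e ∈ a ∘ a', e ∈ b ∘ b', m ∈ a ∘ b. Show ∃ x, e ∈ m ∘ x.
  -- step 1: b ∈ a' ∘ m
  have h1 : b ∈ ⋃ l ∈ N.op a' a, N.op l b := by
    refine Set.mem_biUnion (show N.e ∈ N.op a' a by rw [N.comm]; exact hea) ?_
    rw [N.identity]; rfl
  rw [← N.assoc] at h1
  obtain ⟨k, hk, hbk⟩ := Set.mem_iUnion₂.mp h1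
  have hkm : k = m := hPD a b k m hk hm
  rw [hkm] at hbk
  -- now b ∈ a' ∘ k = a' ∘ m, so b ∈ m ∘ a'
  have h2 : N.e ∈ ⋃ l ∈ N.op m a', N.op l b' := by
    refine Set.mem_biUnion ?_ heb
    rw [N.comm]; exact hbk
  rw [← N.assoc] at h2
  obtain ⟨x, -, hx⟩ := Set.mem_iUnion₂.mp h2
  exact ⟨x, N.e, hx, trivial, rfl⟩
end

section
/- In any total deterministic BBI model (where for all a, b, the composition a ∘ b is a singleton), the formula (¬⊤* −∗ ⊥) → ⊤* is valid. -/
/-- In any total deterministic BBI model, (¬⊤* −∗ ⊥) → ⊤* is valid. -/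
theorem bbi_td_valid {M : Type} (N : NDM M) (v : ℕ → Set M)
    (hTD : ∀ a b : M, ∃ c : M, N.op a b = {c})
    (m : M) :
    force N v m
      (BBIForm.imp (BBIForm.wand (BBIForm.neg BBIForm.emp) BBIForm.bot) BBIForm.emp) := by
  intro h
  by_contra hm
  obtain ⟨c, hc⟩ := hTD m m
  exact h m c (by rw [hc]; rfl) hm
end

section
/- In any BBI model over a non-deterministic monoid in which composition is total (for all a, b, a ∘ b is nonempty), the formula (⊤* ∧ ((p ∗ q) −∗ ⊥)) → ((p −∗ ⊥) ∨ (q −∗ ⊥)) is valid. -/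
/-- In any BBI model with total composition,
(⊤* ∧ ((p ∗ q) −∗ ⊥)) → ((p −∗ ⊥) ∨ (q −∗ ⊥)) is valid. -/
theorem bbi_total_valid {M : Type} (N : NDM M) (v : ℕ → Set M)
    (hTot : ∀ a b : M, ∃ c : M, c ∈ N.op a b)
    (p q : ℕ) (m : M) :
    force N v m
      (BBIForm.imp
        (BBIForm.conj BBIForm.emp
          (BBIForm.wand (BBIForm.star (BBIForm.atom p) (BBIForm.atom q)) BBIForm.bot))
        (BBIForm.disj (BBIForm.wand (BBIForm.atom p) BBIForm.bot)
                      (BBIForm.wand (BBIForm.atom q) BBIForm.bot))) := by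
  rintro ⟨rfl, hw⟩
  by_contra h
  simp only [force] at h
  push_neg at h
  obtain ⟨⟨a, b, hab, hap, -⟩, ⟨a', b', hab', haq, -⟩⟩ := h
  obtain ⟨c, hc⟩ := hTot a a'
  exact hw c c (by rw [N.identity]; rfl) ⟨a, a', hc, hap, haq⟩
end
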